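/- Let S be a finite nonempty subset of ℝ^d (more precisely, a finite multiset or finite indexed family of points) and let μ = (1/|S|) Σ_{x∈S} x be its centroid. Then there exists a point p ∈ S such that Σ_{x∈S} ‖x − p‖² ≤ 2 · Σ_{x∈S} ‖x − μ‖². -/

import Mathlib

open Finset

lemma bias_variance {d : ℕ} {ι : Type*} [Fintype ι] [Nonempty ι]
    (p : ι → EuclideanSpace ℝ (Fin d)) (c : EuclideanSpace ℝ (Fin d)) :
    ∑ i : ι, ‖p i - c‖ ^ 2 =
      ∑ i : ι, ‖p i - ((Fintype.card ι : ℝ)⁻¹ • ∑ k : ι, p k)‖ ^ 2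
        + (Fintype.card ι : ℝ) * ‖((Fintype.card ι : ℝ)⁻¹ • ∑ k : ι, p k) - c‖ ^ 2 := by
  set μ : EuclideanSpace ℝ (Fin d) := (Fintype.card ι : ℝ)⁻¹ • ∑ k : ι, p k with hμ
  have hn : (Fintype.card ι : ℝ) ≠ 0 := by
    exact_mod_cast Fintype.card_ne_zero
  have hsum : ∑ i : ι, (p i - μ) = 0 := by
    rw [Finset.sum_sub_distrib, Finset.sum_const, hμ, card_univ, ← Nat.cast_smul_eq_nsmul ℝ,
      smul_smul, mul_inv_cancel₀ hn, one_smul, sub_self]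
  have key : ∀ i, ‖p i - c‖ ^ 2 =
      ‖p i - μ‖ ^ 2 + 2 * inner ℝ (p i - μ) (μ - c) + ‖μ - c‖ ^ 2 := by
    intro i
    have : p i - c = (p i - μ) + (μ - c) := by abel
    rw [this, @norm_add_sq_real]
  simp_rw [key]
  rw [Finset.sum_add_distrib, Finset.sum_add_distrib, Finset.sum_const, card_univ]
  have : ∑ i : ι, 2 * inner ℝ (p i - μ) (μ - c) = (2:ℝ) * inner ℝ (∑ i : ι, (p i - μ)) (μ - c) := by
    rw [← Finset.mul_sum, sum_inner]
  rw [this, hsum, inner_zero_left, mul_zero, add_zero, nsmul_eq_mul]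

theorem exists_point_center_two_approx {d : ℕ} {ι : Type*} [Fintype ι]
    [Nonempty ι] (p : ι → EuclideanSpace ℝ (Fin d)) :
    ∃ j : ι,
      ∑ i : ι, ‖p i - p j‖ ^ 2 ≤
        2 * ∑ i : ι, ‖p i - ((Fintype.card ι : ℝ)⁻¹ • ∑ k : ι, p k)‖ ^ 2 := by
  set μ : EuclideanSpace ℝ (Fin d) := (Fintype.card ι : ℝ)⁻¹ • ∑ k : ι, p k with hμ
  obtain ⟨j, hj⟩ := Finset.exists_min_image Finset.univ (fun i => ‖p i - μ‖ ^ 2)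
    (Finset.univ_nonempty)
  refine ⟨j, ?_⟩
  have hn : (0:ℝ) < (Fintype.card ι : ℝ) := by exact_mod_cast Fintype.card_pos
  have hjle : (Fintype.card ι : ℝ) * ‖p j - μ‖ ^ 2 ≤ ∑ i : ι, ‖p i - μ‖ ^ 2 := by
    calc (Fintype.card ι : ℝ) * ‖p j - μ‖ ^ 2
        = ∑ _i : ι, ‖p j - μ‖ ^ 2 := by rw [Finset.sum_const, card_univ, nsmul_eq_mul]
      _ ≤ ∑ i : ι, ‖p i - μ‖ ^ 2 := Finset.sum_le_sum (fun i _ => hj.2 i (Finset.mem_univ i))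
  have hbv := bias_variance p (p j)
  rw [← hμ] at hbv
  rw [hbv]
  have : ‖μ - p j‖ = ‖p j - μ‖ := norm_sub_rev _ _
  rw [this]
  linarith
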